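/- arXiv:2503.19454 — 3 statements merged into one kernel-verified Lean document; each statement's English description precedes it below -/
import Mathlib

section
/- The small space s_{k,Φ,w} is the largest linear subspace contained in the class c_{k,Φ,w}: s_{k,Φ,w} ⊆ c_{k,Φ,w}, and if S is any vector subspace of the space of complex sequences with S ⊆ c_{k,Φ,w}, then S ⊆ s_{k,Φ,w}. -/
open Filter Topology

def IsOrlicz (Φ : ℝ → ℝ) : Prop :=
  ContinuousOn Φ (Set.Ici 0) ∧ MonotoneOn Φ (Set.Ici 0) ∧
    ConvexOn ℝ (Set.Ici 0) Φ ∧ Φ 0 = 0 ∧ (∀ t > 0, 0 < Φ t) ∧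
    Tendsto Φ atTop atTop

noncomputable def mu (k : ℝ) (Φ : ℝ → ℝ) (w : ℤ → ℝ) (m : ℤ) : ℝ :=
  w m * (1 + Φ |(m : ℝ)|) ^ k

def MemC (k : ℝ) (Φ : ℝ → ℝ) (w : ℤ → ℝ) (p : ℤ → ℂ) : Prop :=
  Summable fun m : ℤ => mu k Φ w m * Φ (‖p m‖)

def MemS (k : ℝ) (Φ : ℝ → ℝ) (w : ℤ → ℝ) (p : ℤ → ℂ) : Prop :=
  ∀ ρ > (0 : ℝ), Summable fun m : ℤ => mu k Φ w m * Φ (‖p m‖ / ρ)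

def normSet (k : ℝ) (Φ : ℝ → ℝ) (w : ℤ → ℝ) (p : ℤ → ℂ) : Set ℝ :=
  {ρ : ℝ | 0 < ρ ∧ (Summable fun m : ℤ => mu k Φ w m * Φ (‖p m‖ / ρ)) ∧
    ∑' m : ℤ, mu k Φ w m * Φ (‖p m‖ / ρ) ≤ 1}

noncomputable def luxNorm (k : ℝ) (Φ : ℝ → ℝ) (w : ℤ → ℝ) (p : ℤ → ℂ) : ℝ :=
  sInf (normSet k Φ w p)

def MemL (k : ℝ) (Φ : ℝ → ℝ) (w : ℤ → ℝ) (p : ℤ → ℂ) : Prop :=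
  (normSet k Φ w p).Nonempty

def Delta2 (Φ : ℝ → ℝ) : Prop :=
  ∃ C : ℝ, ∀ᶠ t in 𝓝[>] (0 : ℝ), Φ (2 * t) / Φ t ≤ C

theorem stmt9 (Φ : ℝ → ℝ) (hΦ : IsOrlicz Φ) (w : ℤ → ℝ) (hw : ∀ m, 0 < w m) (k : ℝ) :
    (∀ p : ℤ → ℂ, MemS k Φ w p → MemC k Φ w p) ∧
      (∀ S : Submodule ℂ (ℤ → ℂ), (S : Set (ℤ → ℂ)) ⊆ {p | MemC k Φ w p} →
        (S : Set (ℤ → ℂ)) ⊆ {p | MemS k Φ w p}) := by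
  constructor
  · intro p hp
    simpa [MemC] using hp 1 one_pos
  · intro S hS p hp ρ hρ
    have hmem : ((ρ : ℂ)⁻¹ • p) ∈ S := S.smul_mem _ hp
    have h := hS hmem
    simp only [Set.mem_setOf_eq, MemC] at h
    simpa [div_eq_inv_mul, abs_of_pos hρ] using h
end

section
/- The small Orlicz-Sobolev sequence space s_{k,Φ,w} is separable with respect to the Luxemburg norm ‖·‖_{k,Φ,w}. -/
open Filter Topology

theorem stmt11 (Φ : ℝ → ℝ) (hΦ : IsOrlicz Φ) (w : ℤ → ℝ) (hw : ∀ m, 0 < w m) (k : ℝ) :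
    ∃ D : Set (ℤ → ℂ), D.Countable ∧ D ⊆ {p | MemS k Φ w p} ∧
      ∀ p : ℤ → ℂ, MemS k Φ w p → ∀ ε > (0 : ℝ), ∃ q ∈ D, luxNorm k Φ w (p - q) ≤ ε := by
  classical
  obtain ⟨hcont, hmono, _hconv, h0, hposΦ, _htop⟩ := hΦ
  have hΦnn : ∀ t : ℝ, 0 ≤ t → 0 ≤ Φ t := by
    intro t ht
    rcases eq_or_lt_of_le ht with h | h
    · simp [← h, h0]
    · exact (hposΦ t h).le
  have hmu : ∀ m, 0 < mu k Φ w m := by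
    intro m
    have h1 : (0:ℝ) < 1 + Φ |(m : ℝ)| := by
      have := hΦnn |(m : ℝ)| (abs_nonneg _)
      linarith
    exact mul_pos (hw m) (Real.rpow_pos_of_pos h1 k)
  set g : (ℤ →₀ ℚ × ℚ) → (ℤ → ℂ) :=
    fun f m => (((f m).1 : ℝ) : ℂ) + (((f m).2 : ℝ) : ℂ) * Complex.I with hgdef
  refine ⟨Set.range g, Set.countable_range _, ?_, ?_⟩
  · -- range g ⊆ MemS
    rintro q ⟨f, rfl⟩ ρ hρ
    apply summable_of_ne_finset_zero (s := f.support)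
    intro m hm
    have hfm : f m = 0 := Finsupp.notMem_support_iff.mp hm
    simp [hgdef, hfm, h0]
  · intro p hp ε hε
    have hsum : Summable fun m : ℤ => mu k Φ w m * Φ (‖p m‖ / ε) := hp ε hε
    have htail := tendsto_tsum_compl_atTop_zero
      (fun m : ℤ => mu k Φ w m * Φ (‖p m‖ / ε))
    have h12 : (0:ℝ) < 1/2 := by norm_num
    obtain ⟨F, hF⟩ := (htail.eventually (eventually_le_nhds h12)).exists
    set S : ℝ := ∑ m ∈ F, mu k Φ w m with hSdef
    have hSnn : 0 ≤ S := Finset.sum_nonneg fun m _ => (hmu m).le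
    set c : ℝ := 1 / (2 * (S + 1)) with hcdef
    have hcpos : 0 < c := by positivity
    -- continuity of Φ at 0 from the right : get δ
    have hcw : ContinuousWithinAt Φ (Set.Ici 0) 0 := hcont 0 (by simp)
    have hev : {t : ℝ | Φ t < c} ∈ 𝓝[Set.Ici (0:ℝ)] 0 := by
      have h' := hcw.tendsto
      rw [h0] at h'
      exact h' (Iio_mem_nhds hcpos)
    obtain ⟨δ, hδpos, hδ⟩ := Metric.mem_nhdsWithin_iff.mp hev
    have hΦsmall : ∀ t : ℝ, 0 ≤ t → t < δ → Φ t < c := by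
      intro t ht htδ
      exact hδ ⟨by simpa [Real.dist_eq, abs_of_nonneg ht] using htδ, ht⟩
    -- choose rational approximations
    have hεδ : (0:ℝ) < ε * δ / 2 := by positivity
    choose r1 hr1 using fun m : ℤ => exists_rat_near (p m).re hεδ
    choose r2 hr2 using fun m : ℤ => exists_rat_near (p m).im hεδ
    set f : ℤ →₀ ℚ × ℚ := Finsupp.onFinset F
      (fun m => if m ∈ F then (r1 m, r2 m) else 0)
      (fun m h => by by_contra hm; simp [hm] at h) with hfdef
    set q : ℤ → ℂ := g f with hqdef
    have hq0 : ∀ m ∉ F, q m = 0 := by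
      intro m hm
      simp [hqdef, hgdef, hfdef, Finsupp.onFinset_apply, hm]
    have hqF : ∀ m ∈ F, ‖p m - q m‖ < ε * δ := by
      intro m hm
      have hq : q m = (((r1 m : ℝ)) : ℂ) + (((r2 m : ℝ)) : ℂ) * Complex.I := by
        simp [hqdef, hgdef, hfdef, Finsupp.onFinset_apply, hm]
      have hre : (p m - q m).re = (p m).re - (r1 m : ℝ) := by
        simp [hq]
      have him : (p m - q m).im = (p m).im - (r2 m : ℝ) := by
        simp [hq]
      calc ‖p m - q m‖ ≤ |(p m - q m).re| + |(p m - q m).im| :=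
            Complex.norm_le_abs_re_add_abs_im _
        _ < ε * δ / 2 + ε * δ / 2 := by
            rw [hre, him]; exact add_lt_add (hr1 m) (hr2 m)
        _ = ε * δ := by ring
    -- the key pointwise bound on F
    have hterm_le : ∀ m ∈ F, mu k Φ w m * Φ (‖(p - q) m‖ / ε) ≤ mu k Φ w m * c := by
      intro m hm
      have habs : ‖(p - q) m‖ / ε < δ := by
        rw [div_lt_iff₀ hε]
        simpa [Pi.sub_apply, mul_comm] using hqF m hm
      have hnn : 0 ≤ ‖(p - q) m‖ / ε :=
        div_nonneg (norm_nonneg _) hε.le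
      exact mul_le_mul_of_nonneg_left (hΦsmall _ hnn habs).le (hmu m).le
    -- off F, terms agree with the base sequence
    have hoff : ∀ m ∉ F, mu k Φ w m * Φ (‖(p - q) m‖ / ε)
        = mu k Φ w m * Φ (‖p m‖ / ε) := by
      intro m hm
      simp [Pi.sub_apply, hq0 m hm]
    -- summability of the new terms
    have hsum' : Summable fun m : ℤ => mu k Φ w m * Φ (‖(p - q) m‖ / ε) := by
      have hdiff : Summable fun m : ℤ =>
          mu k Φ w m * Φ (‖(p - q) m‖ / ε)
            - mu k Φ w m * Φ (‖p m‖ / ε) := by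
        apply summable_of_ne_finset_zero (s := F)
        intro m hm
        rw [hoff m hm]; ring
      have := hdiff.add hsum
      refine this.congr fun m => ?_
      ring
    -- tsum bound
    have hnonneg : ∀ m : ℤ, 0 ≤ mu k Φ w m * Φ (‖(p - q) m‖ / ε) := by
      intro m
      exact mul_nonneg (hmu m).le (hΦnn _ (div_nonneg (norm_nonneg _) hε.le))
    have hsplit := Summable.sum_add_tsum_compl (s := F) hsum'
    have hcompl_eq : ∑' (m : ↑(↑F : Set ℤ)ᶜ), mu k Φ w ↑m * Φ (‖(p - q) ↑m‖ / ε)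
        = ∑' (m : {x : ℤ // x ∉ F}), mu k Φ w ↑m * Φ (‖p ↑m‖ / ε) := by
      exact tsum_congr fun m => hoff m m.2
    have hsumF : ∑ m ∈ F, mu k Φ w m * Φ (‖(p - q) m‖ / ε) ≤ 1/2 := by
      calc ∑ m ∈ F, mu k Φ w m * Φ (‖(p - q) m‖ / ε)
          ≤ ∑ m ∈ F, mu k Φ w m * c := Finset.sum_le_sum hterm_le
        _ = S * c := by rw [← Finset.sum_mul]
        _ ≤ 1/2 := by
            rw [hcdef, mul_one_div, div_le_div_iff₀ (by positivity) (by norm_num)]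
            nlinarith
    have htsum : ∑' m : ℤ, mu k Φ w m * Φ (‖(p - q) m‖ / ε) ≤ 1 := by
      rw [← hsplit, hcompl_eq]
      have : ∑' (m : {x : ℤ // x ∉ F}), mu k Φ w ↑m * Φ (‖p ↑m‖ / ε) ≤ 1/2 := hF
      linarith
    refine ⟨q, ⟨f, rfl⟩, ?_⟩
    have hmem : ε ∈ normSet k Φ w (p - q) := ⟨hε, hsum', htsum⟩
    exact csInf_le ⟨0, fun x hx => hx.1.le⟩ hmem
end

section
/- Let Φ be an Orlicz function satisfying the Δ₂-condition at zero, let k' > k ≥ 0 and suppose inf_{m∈ℤ} w_m > 0. Then the embedding s_{k',Φ,w} ↪ s_{k,Φ,w} is compact: every bounded subset of s_{k',Φ,w} has compact closure in s_{k,Φ,w}. -/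
open Filter Topology
set_option maxHeartbeats 1000000

section Helpers

variable {Φ : ℝ → ℝ}

lemma phi_nonneg (hΦ : IsOrlicz Φ) {t : ℝ} (ht : 0 ≤ t) : 0 ≤ Φ t := by
  rcases eq_or_lt_of_le ht with h | h
  · rw [← h, hΦ.2.2.2.1]
  · exact (hΦ.2.2.2.2.1 t h).le

lemma phi_scale (hΦ : IsOrlicz Φ) {t θ : ℝ} (ht : 0 ≤ t) (h0 : 0 ≤ θ) (h1 : θ ≤ 1) :
    Φ (θ * t) ≤ θ * Φ t := by
  have h := hΦ.2.2.1.2 (Set.mem_Ici.2 ht) (Set.mem_Ici.2 le_rfl) h0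
    (by linarith : (0:ℝ) ≤ 1 - θ) (by ring)
  simp only [smul_eq_mul, mul_zero, add_zero, hΦ.2.2.2.1] at h
  linarith

lemma phi_convex_half (hΦ : IsOrlicz Φ) {a b : ℝ} (ha : 0 ≤ a) (hb : 0 ≤ b) :
    Φ ((1/2)*a + (1/2)*b) ≤ (1/2)*Φ a + (1/2)*Φ b := by
  have h := hΦ.2.2.1.2 (Set.mem_Ici.2 ha) (Set.mem_Ici.2 hb)
    (by norm_num : (0:ℝ) ≤ 1/2) (by norm_num : (0:ℝ) ≤ 1/2) (by norm_num)
  simpa [smul_eq_mul] using h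

lemma doubling (hΦ : IsOrlicz Φ) (hΔ : Delta2 Φ) {T : ℝ} (hT : 0 < T) :
    ∃ C : ℝ, 1 ≤ C ∧ ∀ t, 0 ≤ t → t ≤ T → Φ (2 * t) ≤ C * Φ t := by
  obtain ⟨C₀, hC₀⟩ := hΔ
  obtain ⟨δ, hδmem, hball⟩ := mem_nhdsGT_iff_exists_Ioo_subset.1 hC₀
  have hδ : 0 < δ := hδmem
  have key : ∀ t, 0 < t → t < δ → Φ (2 * t) ≤ C₀ * Φ t := by
    intro t ht htδ
    have := hball (Set.mem_Ioo.2 ⟨ht, htδ⟩)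
    have hΦt : 0 < Φ t := hΦ.2.2.2.2.1 t ht
    calc Φ (2 * t) = Φ (2*t) / Φ t * Φ t := by field_simp
    _ ≤ C₀ * Φ t := by apply mul_le_mul_of_nonneg_right this hΦt.le
  have hδ2 : 0 < δ / 2 := by linarith
  have hΦδ2 : 0 < Φ (δ/2) := hΦ.2.2.2.2.1 _ hδ2
  refine ⟨max C₀ (max (Φ (2*T) / Φ (δ/2)) 1), le_trans (le_max_right _ _) (le_max_right _ _), ?_⟩
  intro t ht0 htT
  rcases eq_or_lt_of_le ht0 with h | h
  · rw [← h, mul_zero, hΦ.2.2.2.1, mul_zero]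
  rcases lt_or_ge t (δ/2) with hlt | hge
  · calc Φ (2*t) ≤ C₀ * Φ t := key t h (by linarith)
    _ ≤ _ := mul_le_mul_of_nonneg_right (le_max_left _ _) (phi_nonneg hΦ ht0)
  · have h1 : Φ (2*t) ≤ Φ (2*T) := hΦ.2.1 (Set.mem_Ici.2 (by linarith)) (Set.mem_Ici.2 (by linarith)) (by linarith)
    have h2 : Φ (δ/2) ≤ Φ t := hΦ.2.1 hδ2.le ht0 (by linarith)
    have h3 : Φ (2*T) / Φ (δ/2) ≤ max C₀ (max (Φ (2*T) / Φ (δ/2)) 1) :=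
      le_trans (le_max_left _ _) (le_max_right _ _)
    calc Φ (2*t) ≤ Φ (2*T) := h1
    _ = Φ (2*T) / Φ (δ/2) * Φ (δ/2) := by field_simp
    _ ≤ max C₀ (max (Φ (2*T) / Φ (δ/2)) 1) * Φ t := by
        apply mul_le_mul h3 h2 hΦδ2.le
        have : (0:ℝ) ≤ 1 := zero_le_one
        exact le_trans (le_trans this (le_max_right _ _)) (le_max_right _ _)

lemma scaling (hΦ : IsOrlicz Φ) (hΔ : Delta2 Φ) {lam T : ℝ} (hlam : 0 ≤ lam) (hT : 0 < T) :
    ∃ G : ℝ, 1 ≤ G ∧ ∀ t, 0 ≤ t → t ≤ T → Φ (lam * t) ≤ G * Φ t := by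
  obtain ⟨N, hN⟩ := pow_unbounded_of_one_lt lam (by norm_num : (1:ℝ) < 2)
  obtain ⟨C, hC1, hC⟩ := doubling hΦ hΔ (show 0 < 2^N * T by positivity)
  have main : ∀ n : ℕ, n ≤ N → ∀ t, 0 ≤ t → t ≤ T → Φ (2^n * t) ≤ C^n * Φ t := by
    intro n
    induction n with
    | zero => intro _ t ht _; simp
    | succ n ih =>
      intro hn t ht htT
      have hn' : n ≤ N := Nat.le_of_succ_le hn
      have h1 : Φ (2^(n+1) * t) = Φ (2 * (2^n * t)) := by ring_nf
      have h2 : Φ (2 * (2^n * t)) ≤ C * Φ (2^n * t) := by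
        apply hC _ (by positivity)
        have h2n : (2:ℝ)^n ≤ 2^N := by
          apply pow_le_pow_right₀ (by norm_num) hn'
        calc (2:ℝ)^n * t ≤ 2^N * t := by nlinarith
        _ ≤ 2^N * T := by nlinarith [pow_pos (show (0:ℝ) < 2 by norm_num) N]
      calc Φ (2^(n+1) * t) = Φ (2 * (2^n * t)) := h1
      _ ≤ C * Φ (2^n * t) := h2
      _ ≤ C * (C^n * Φ t) := by
          have := ih hn' t ht htT
          nlinarith
      _ = C^(n+1) * Φ t := by ring
  refine ⟨C^N, one_le_pow₀ hC1, ?_⟩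
  intro t ht htT
  calc Φ (lam * t) ≤ Φ (2^N * t) := by
        apply hΦ.2.1 (Set.mem_Ici.2 (mul_nonneg hlam ht)) (Set.mem_Ici.2 (by positivity))
        nlinarith
  _ ≤ C^N * Φ t := main N le_rfl t ht htT

section MAIN
variable {w : ℤ → ℝ} {w₀ : ℝ} (hΦ : IsOrlicz Φ) (hw₀ : 0 < w₀) (hw : ∀ m, w₀ ≤ w m)
include hΦ hw₀ hw

lemma mu_ge {k : ℝ} (hk : 0 ≤ k) (m : ℤ) : w₀ ≤ mu k Φ w m := by
  have hb : (0:ℝ) ≤ Φ |(m:ℝ)| := phi_nonneg hΦ (abs_nonneg _)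
  have h1 : (1:ℝ) ≤ (1 + Φ |(m:ℝ)|) ^ k := Real.one_le_rpow (by linarith) hk
  have h2 := hw m
  unfold mu; nlinarith

lemma mu_pos {k : ℝ} (hk : 0 ≤ k) (m : ℤ) : 0 < mu k Φ w m :=
  lt_of_lt_of_le hw₀ (mu_ge hΦ hw₀ hw hk m)

lemma mu_mono {k k' : ℝ} (hk : 0 ≤ k) (hkk : k ≤ k') (m : ℤ) :
    mu k Φ w m ≤ mu k' Φ w m := by
  have hb : (0:ℝ) ≤ Φ |(m:ℝ)| := phi_nonneg hΦ (abs_nonneg _)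
  have h1 : (1 + Φ |(m:ℝ)|) ^ k ≤ (1 + Φ |(m:ℝ)|) ^ k' :=
    Real.rpow_le_rpow_of_exponent_le (by linarith) hkk
  have h2 : 0 < w m := lt_of_lt_of_le hw₀ (hw m)
  unfold mu; nlinarith

lemma term_nonneg {k : ℝ} (hk : 0 ≤ k) (p : ℤ → ℂ) {ρ : ℝ} (h0 : 0 < ρ) (m : ℤ) :
    0 ≤ mu k Φ w m * Φ (‖p m‖ / ρ) :=
  mul_nonneg (mu_pos hΦ hw₀ hw hk m).le
    (phi_nonneg hΦ (div_nonneg (norm_nonneg _) h0.le))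

lemma term_le_term {k : ℝ} (hk : 0 ≤ k) (p : ℤ → ℂ) {ρ ρ' : ℝ} (h0 : 0 < ρ') (h : ρ' ≤ ρ)
    (m : ℤ) :
    mu k Φ w m * Φ (‖p m‖ / ρ) ≤ mu k Φ w m * Φ (‖p m‖ / ρ') := by
  apply mul_le_mul_of_nonneg_left _ (mu_pos hΦ hw₀ hw hk m).le
  apply hΦ.2.1 (Set.mem_Ici.2 (div_nonneg (norm_nonneg _) (by linarith)))
    (Set.mem_Ici.2 (div_nonneg (norm_nonneg _) h0.le))
  rw [div_le_div_iff₀ (by linarith) h0]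
  nlinarith [norm_nonneg (p m)]

lemma normSet_nonempty {k : ℝ} (hk : 0 ≤ k) {p : ℤ → ℂ} (hp : MemS k Φ w p) :
    (normSet k Φ w p).Nonempty := by
  have hs1 : Summable fun m : ℤ => mu k Φ w m * Φ (‖p m‖ / 1) := hp 1 one_pos
  set S := ∑' m : ℤ, mu k Φ w m * Φ (‖p m‖ / 1) with hS
  set ρ := max 1 S with hρdef
  have hρ1 : (1:ℝ) ≤ ρ := le_max_left _ _
  have hρ0 : (0:ℝ) < ρ := by linarith
  have hterm : ∀ m : ℤ, mu k Φ w m * Φ (‖p m‖ / ρ) ≤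
      (1/ρ) * (mu k Φ w m * Φ (‖p m‖ / 1)) := by
    intro m
    have h1 : ‖p m‖ / ρ = (1/ρ) * (‖p m‖ / 1) := by
      field_simp
    rw [h1]
    have h2 := phi_scale hΦ (div_nonneg (norm_nonneg (p m)) zero_le_one)
      (by positivity : (0:ℝ) ≤ 1/ρ) (by rw [div_le_one hρ0]; exact hρ1)
    calc mu k Φ w m * Φ ((1/ρ) * (‖p m‖ / 1))
        ≤ mu k Φ w m * ((1/ρ) * Φ (‖p m‖ / 1)) :=
          mul_le_mul_of_nonneg_left h2 (mu_pos hΦ hw₀ hw hk m).le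
      _ = (1/ρ) * (mu k Φ w m * Φ (‖p m‖ / 1)) := by ring
  have hsum : Summable fun m : ℤ => mu k Φ w m * Φ (‖p m‖ / ρ) :=
    Summable.of_nonneg_of_le (fun m => term_nonneg hΦ hw₀ hw hk p hρ0 m) hterm
      (hs1.mul_left (1/ρ))
  refine ⟨ρ, hρ0, hsum, ?_⟩
  calc ∑' m : ℤ, mu k Φ w m * Φ (‖p m‖ / ρ)
      ≤ ∑' m : ℤ, (1/ρ) * (mu k Φ w m * Φ (‖p m‖ / 1)) :=
        Summable.tsum_le_tsum hterm hsum (hs1.mul_left (1/ρ))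
    _ = (1/ρ) * S := by rw [tsum_mul_left]
    _ ≤ 1 := by
        rw [div_mul_eq_mul_div, one_mul, div_le_one hρ0]
        exact le_max_right _ _

lemma lux_mod {k : ℝ} (hk : 0 ≤ k) {p : ℤ → ℂ} (hp : MemS k Φ w p) {ρ : ℝ}
    (hρ0 : 0 < ρ) (hρ : luxNorm k Φ w p < ρ) :
    (Summable fun m : ℤ => mu k Φ w m * Φ (‖p m‖ / ρ)) ∧
      ∑' m : ℤ, mu k Φ w m * Φ (‖p m‖ / ρ) ≤ 1 := by
  obtain ⟨ρ', hρ'mem, hlt⟩ :=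
    exists_lt_of_csInf_lt (normSet_nonempty hΦ hw₀ hw hk hp) hρ
  obtain ⟨h0', hsum', hts'⟩ := hρ'mem
  have hle := term_le_term hΦ hw₀ hw hk p h0' hlt.le
  have hsum : Summable fun m : ℤ => mu k Φ w m * Φ (‖p m‖ / ρ) :=
    Summable.of_nonneg_of_le (fun m => term_nonneg hΦ hw₀ hw hk p hρ0 m) hle hsum'
  exact ⟨hsum, le_trans (Summable.tsum_le_tsum hle hsum hsum') hts'⟩

end MAIN

end Helpers

theorem stmt18 (Φ : ℝ → ℝ) (hΦ : IsOrlicz Φ) (hΔ : Delta2 Φ)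
    (w : ℤ → ℝ) (hinf : ∃ w₀ > (0 : ℝ), ∀ m, w₀ ≤ w m)
    (k k' : ℝ) (hk : 0 ≤ k) (hkk : k < k')
    (K : Set (ℤ → ℂ)) (hKs : K ⊆ {p | MemS k' Φ w p})
    (hKb : ∃ κ > (0 : ℝ), ∀ p ∈ K, luxNorm k' Φ w p ≤ κ)
    (u : ℕ → ℤ → ℂ) (hu : ∀ n, u n ∈ K) :
    ∃ φ : ℕ → ℕ, StrictMono φ ∧ ∃ p : ℤ → ℂ, MemS k Φ w p ∧
      Tendsto (fun n => luxNorm k Φ w (u (φ n) - p)) atTop (𝓝 0) := by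
  obtain ⟨w₀, hw₀, hw⟩ := hinf
  obtain ⟨κ, hκ, hKbd⟩ := hKb
  have hk' : 0 ≤ k' := le_trans hk hkk.le
  have hmono := hΦ.2.1
  have hΦ0 := hΦ.2.2.2.1
  set κ' : ℝ := κ + 1 with hκ'def
  have hκ'0 : 0 < κ' := by linarith
  have hmemS : ∀ n, MemS k' Φ w (u n) := fun n => hKs (hu n)
  have hmod : ∀ n, (Summable fun m : ℤ => mu k' Φ w m * Φ (‖u n m‖ / κ')) ∧
      ∑' m : ℤ, mu k' Φ w m * Φ (‖u n m‖ / κ') ≤ 1 := fun n =>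
    lux_mod hΦ hw₀ hw hk' (hmemS n) hκ'0
      (lt_of_le_of_lt (hKbd _ (hu n)) (by simp [hκ'def]))
  -- uniform bound on coefficients
  obtain ⟨b, hb⟩ : ∃ b : ℝ, ∀ t ≥ b, 1/w₀ < Φ t :=
    eventually_atTop.1 (hΦ.2.2.2.2.2.eventually_gt_atTop (1/w₀))
  set R : ℝ := κ' * max b 1 with hRdef
  have hR0 : 0 < R := by
    have : (0:ℝ) < max b 1 := lt_of_lt_of_le one_pos (le_max_right _ _)
    positivity
  have hR : ∀ n m, ‖u n m‖ ≤ R := by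
    intro n m
    by_contra hcon
    push_neg at hcon
    have h1 : b ≤ ‖u n m‖ / κ' := by
      rw [le_div_iff₀ hκ'0]
      calc b * κ' = κ' * b := by ring
      _ ≤ κ' * max b 1 := by nlinarith [le_max_left b 1]
      _ ≤ ‖u n m‖ := hcon.le
    have h2 : 1/w₀ < Φ (‖u n m‖ / κ') := hb _ h1
    have h3 : mu k' Φ w m * Φ (‖u n m‖ / κ') ≤ 1 :=
      le_trans (Summable.le_tsum (hmod n).1 m
        (fun j _ => term_nonneg hΦ hw₀ hw hk' (u n) hκ'0 j)) (hmod n).2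
    have h4 : w₀ ≤ mu k' Φ w m := mu_ge hΦ hw₀ hw hk' m
    have h5 : 0 < Φ (‖u n m‖ / κ') := by
      have : 0 < 1/w₀ := by positivity
      linarith
    have h6 : w₀ * (1/w₀) = 1 := by field_simp
    nlinarith
  -- extract a pointwise convergent subsequence
  have hcompact : IsCompact {g : ℤ → ℂ | ∀ m, g m ∈ Metric.closedBall (0:ℂ) R} := by
    have he : {g : ℤ → ℂ | ∀ m, g m ∈ Metric.closedBall (0:ℂ) R} =
        Set.pi Set.univ (fun _ => Metric.closedBall (0:ℂ) R) := by
      ext g; simp [Set.mem_pi]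
    rw [he]; exact isCompact_univ_pi (fun _ => isCompact_closedBall _ _)
  obtain ⟨p, hpS, φ, hφ, hconv⟩ := hcompact.isSeqCompact
    (x := u) (fun n m => by simpa [Complex.dist_eq] using hR n m)
  have hpt : ∀ m, Tendsto (fun n => u (φ n) m) atTop (𝓝 (p m)) :=
    fun m => (tendsto_pi_nhds.1 hconv) m
  have habs0 : ∀ m, Tendsto (fun n => ‖u (φ n) m - p m‖) atTop (𝓝 0) := by
    intro m
    have h1 : Tendsto (fun n => u (φ n) m - p m) atTop (𝓝 0) := by
      simpa using (hpt m).sub (tendsto_const_nhds (x := p m))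
    simpa using h1.norm
  have hpabs : ∀ m, ‖p m‖ ≤ R := fun m => by
    simpa [Complex.dist_eq] using hpS m
  -- modular bounds for p at κ'
  have hptermcont : ∀ (ρ : ℝ), 0 < ρ → ∀ m,
      Tendsto (fun n => Φ (‖u (φ n) m‖ / ρ)) atTop
        (𝓝 (Φ (‖p m‖ / ρ))) := by
    intro ρ hρ m
    have h1 : Tendsto (fun n => ‖u (φ n) m‖ / ρ) atTop
        (𝓝 (‖p m‖ / ρ)) := by
      have h2 := (hpt m).norm
      simpa using h2.div_const ρ
    have h2 : ContinuousWithinAt Φ (Set.Ici 0) (‖p m‖ / ρ) :=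
      hΦ.1 _ (Set.mem_Ici.2 (div_nonneg (norm_nonneg _) hρ.le))
    exact h2.tendsto.comp (tendsto_nhdsWithin_iff.2 ⟨h1, Eventually.of_forall
      fun n => Set.mem_Ici.2 (div_nonneg (norm_nonneg _) hρ.le)⟩)
  have hpsum_le : ∀ F : Finset ℤ,
      ∑ m ∈ F, mu k' Φ w m * Φ (‖p m‖ / κ') ≤ 1 := by
    intro F
    have hlim : Tendsto (fun n => ∑ m ∈ F, mu k' Φ w m * Φ (‖u (φ n) m‖ / κ'))
        atTop (𝓝 (∑ m ∈ F, mu k' Φ w m * Φ (‖p m‖ / κ'))) :=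
      tendsto_finset_sum _ (fun m _ => ((hptermcont κ' hκ'0 m).const_mul _))
    apply le_of_tendsto hlim
    apply Eventually.of_forall
    intro n
    exact le_trans (Summable.sum_le_tsum F (fun m _ => term_nonneg hΦ hw₀ hw hk' _ hκ'0 m)
      (hmod (φ n)).1) (hmod (φ n)).2
  have hpsummable : Summable (fun m : ℤ => mu k' Φ w m * Φ (‖p m‖ / κ')) :=
    summable_of_sum_le (Pi.le_def.2 fun m => term_nonneg hΦ hw₀ hw hk' p hκ'0 m) hpsum_le
  have hptsum : ∑' m : ℤ, mu k' Φ w m * Φ (‖p m‖ / κ') ≤ 1 :=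
    Summable.tsum_le_of_sum_le hpsummable hpsum_le
  -- scaling comparison
  have key : ∀ ρ : ℝ, 0 < ρ → ∃ G : ℝ, 1 ≤ G ∧ ∀ t : ℝ, 0 ≤ t → t ≤ 2*R →
      Φ (t / ρ) ≤ G * Φ (t / κ') := by
    intro ρ hρ
    obtain ⟨G, hG1, hG⟩ := scaling hΦ hΔ (show (0:ℝ) ≤ κ'/ρ by positivity)
      (show (0:ℝ) < 2*R/κ' by positivity)
    refine ⟨G, hG1, fun t ht h2R => ?_⟩
    have h1 : t / ρ = (κ'/ρ) * (t/κ') := by field_simp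
    rw [h1]
    refine hG _ (by positivity) ?_
    rw [div_le_div_iff₀ hκ'0 hκ'0]
    nlinarith
  -- p is in the small space
  have hpMemS : MemS k Φ w p := by
    intro ρ hρ
    obtain ⟨G, hG1, hG⟩ := key ρ hρ
    refine Summable.of_nonneg_of_le (fun m => term_nonneg hΦ hw₀ hw hk p hρ m)
      (fun m => ?_) (hpsummable.mul_left G)
    show mu k Φ w m * Φ (‖p m‖ / ρ) ≤
      G * (mu k' Φ w m * Φ (‖p m‖ / κ'))
    calc mu k Φ w m * Φ (‖p m‖ / ρ)
        ≤ mu k' Φ w m * (G * Φ (‖p m‖ / κ')) := by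
          apply mul_le_mul (mu_mono hΦ hw₀ hw hk hkk.le m)
            (hG _ (norm_nonneg _) (by linarith [hpabs m]))
            (phi_nonneg hΦ (div_nonneg (norm_nonneg _) hρ.le))
            (mu_pos hΦ hw₀ hw hk' m).le
      _ = G * (mu k' Φ w m * Φ (‖p m‖ / κ')) := by ring
  -- the difference sequence
  set q : ℕ → ℤ → ℂ := fun n => u (φ n) - p with hqdef
  have hqeq : ∀ n m, q n m = u (φ n) m - p m := fun n m => rfl
  have hqabs : ∀ n m, ‖q n m‖ ≤ 2*R := by
    intro n m
    rw [hqeq]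
    calc ‖u (φ n) m - p m‖
        ≤ ‖u (φ n) m‖ + ‖p m‖ := by
          simpa using norm_sub_le (u (φ n) m) (p m)
      _ ≤ 2*R := by linarith [hR (φ n) m, hpabs m]
  -- uniform modular bound for q at κ'
  obtain ⟨G₂, hG₂1, hG₂⟩ := key (κ'/2) (by positivity)
  have hqbase : ∀ n, Summable (fun m : ℤ => mu k' Φ w m * Φ (‖q n m‖ / κ')) ∧
      ∑' m : ℤ, mu k' Φ w m * Φ (‖q n m‖ / κ') ≤ G₂ := by
    intro n
    have hterm : ∀ m : ℤ, mu k' Φ w m * Φ (‖q n m‖ / κ') ≤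
        (1/2) * G₂ * (mu k' Φ w m * Φ (‖u (φ n) m‖ / κ'))
        + (1/2) * G₂ * (mu k' Φ w m * Φ (‖p m‖ / κ')) := by
      intro m
      set a := ‖u (φ n) m‖ with hadef
      set bb := ‖p m‖ with hbbdef
      have ha0 : 0 ≤ a := norm_nonneg _
      have hbb0 : 0 ≤ bb := norm_nonneg _
      have hc0 : 0 ≤ ‖q n m‖ := norm_nonneg _
      have hcab : ‖q n m‖ ≤ a + bb := by
        rw [hqeq]
        simpa using norm_sub_le (u (φ n) m) (p m)
      have h1 : Φ (‖q n m‖ / κ') ≤ Φ ((1/2)*(a/(κ'/2)) + (1/2)*(bb/(κ'/2))) := by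
        have heq : (1/2)*(a/(κ'/2)) + (1/2)*(bb/(κ'/2)) = (a+bb)/κ' := by
          field_simp
        rw [heq]
        apply hmono (Set.mem_Ici.2 (div_nonneg hc0 hκ'0.le))
          (Set.mem_Ici.2 (div_nonneg (by linarith) hκ'0.le))
        rw [div_le_div_iff₀ hκ'0 hκ'0]
        nlinarith
      have h2 : Φ ((1/2)*(a/(κ'/2)) + (1/2)*(bb/(κ'/2))) ≤
          (1/2)*Φ (a/(κ'/2)) + (1/2)*Φ (bb/(κ'/2)) :=
        phi_convex_half hΦ (by positivity) (by positivity)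
      have h3 : Φ (a/(κ'/2)) ≤ G₂ * Φ (a/κ') := hG₂ a ha0 (by linarith [hR (φ n) m])
      have h4 : Φ (bb/(κ'/2)) ≤ G₂ * Φ (bb/κ') := hG₂ bb hbb0 (by linarith [hpabs m])
      have hμ : 0 ≤ mu k' Φ w m := (mu_pos hΦ hw₀ hw hk' m).le
      nlinarith [mul_le_mul_of_nonneg_left (le_trans h1 h2) hμ,
        mul_le_mul_of_nonneg_left h3 hμ, mul_le_mul_of_nonneg_left h4 hμ]
    have hdomsum : Summable (fun m : ℤ =>
        (1/2) * G₂ * (mu k' Φ w m * Φ (‖u (φ n) m‖ / κ'))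
        + (1/2) * G₂ * (mu k' Φ w m * Φ (‖p m‖ / κ'))) :=
      ((hmod (φ n)).1.mul_left _).add (hpsummable.mul_left _)
    have hsum : Summable (fun m : ℤ => mu k' Φ w m * Φ (‖q n m‖ / κ')) :=
      Summable.of_nonneg_of_le (fun m => term_nonneg hΦ hw₀ hw hk' _ hκ'0 m) hterm hdomsum
    refine ⟨hsum, ?_⟩
    calc ∑' m : ℤ, mu k' Φ w m * Φ (‖q n m‖ / κ')
        ≤ ∑' m : ℤ, ((1/2) * G₂ * (mu k' Φ w m * Φ (‖u (φ n) m‖ / κ'))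
          + (1/2) * G₂ * (mu k' Φ w m * Φ (‖p m‖ / κ'))) :=
          Summable.tsum_le_tsum hterm hsum hdomsum
      _ = (1/2) * G₂ * (∑' m : ℤ, mu k' Φ w m * Φ (‖u (φ n) m‖ / κ'))
          + (1/2) * G₂ * (∑' m : ℤ, mu k' Φ w m * Φ (‖p m‖ / κ')) := by
          rw [Summable.tsum_add ((hmod (φ n)).1.mul_left _) (hpsummable.mul_left _),
            tsum_mul_left, tsum_mul_left]
      _ ≤ (1/2) * G₂ * 1 + (1/2) * G₂ * 1 := by
          have hg0 : (0:ℝ) ≤ (1/2) * G₂ := by linarith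
          have := (hmod (φ n)).2
          nlinarith
      _ = G₂ := by ring
  -- tail factor
  have hfac : ∀ M : ℕ, ∀ m : ℤ, (M:ℝ) ≤ |(m:ℝ)| → ∀ x : ℝ, 0 ≤ x →
      mu k Φ w m * x ≤ (1 + Φ (M:ℝ))^(k-k') * (mu k' Φ w m * x) := by
    intro M m hMm x hx
    have hb0 : (0:ℝ) ≤ Φ (M:ℝ) := phi_nonneg hΦ (Nat.cast_nonneg M)
    have hbm : Φ (M:ℝ) ≤ Φ |(m:ℝ)| :=
      hmono (Set.mem_Ici.2 (Nat.cast_nonneg M)) (Set.mem_Ici.2 (abs_nonneg _)) hMm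
    have hbase : (0:ℝ) < 1 + Φ |(m:ℝ)| := by
      have := phi_nonneg hΦ (abs_nonneg ((m:ℝ)))
      linarith
    have h1 : mu k Φ w m = mu k' Φ w m * (1 + Φ |(m:ℝ)|)^(k-k') := by
      unfold mu
      rw [mul_assoc, ← Real.rpow_add hbase]
      ring_nf
    have h2 : (1 + Φ |(m:ℝ)|)^(k-k') ≤ (1 + Φ (M:ℝ))^(k-k') :=
      Real.rpow_le_rpow_of_nonpos (by linarith) (by linarith) (by linarith)
    calc mu k Φ w m * x = (1 + Φ |(m:ℝ)|)^(k-k') * (mu k' Φ w m * x) := by rw [h1]; ring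
    _ ≤ (1 + Φ (M:ℝ))^(k-k') * (mu k' Φ w m * x) :=
        mul_le_mul_of_nonneg_right h2 (mul_nonneg (mu_pos hΦ hw₀ hw hk' m).le hx)
  have hfactendsto : Tendsto (fun M : ℕ => (1 + Φ (M:ℝ))^(k-k')) atTop (𝓝 0) := by
    have h1 : Tendsto (fun M : ℕ => 1 + Φ (M:ℝ)) atTop atTop :=
      tendsto_atTop_add_const_left _ 1 (hΦ.2.2.2.2.2.comp tendsto_natCast_atTop_atTop)
    have h2 := (tendsto_rpow_neg_atTop (show (0:ℝ) < k'-k by linarith)).comp h1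
    have h3 : (fun x : ℝ => x ^ (-(k'-k))) ∘ (fun M : ℕ => 1 + Φ (M:ℝ)) =
        fun M : ℕ => (1 + Φ (M:ℝ))^(k-k') := by
      funext M; simp [neg_sub]
    rwa [h3] at h2
  -- the main ε-claim
  have main : ∀ ε : ℝ, 0 < ε → ∀ᶠ n in atTop, luxNorm k Φ w (q n) ≤ ε := by
    intro ε hε
    obtain ⟨G, hG1, hG⟩ := key ε hε
    set B := G * G₂ with hBdef
    have hB0 : 0 < B := by positivity
    have hqε : ∀ n, Summable (fun m : ℤ => mu k' Φ w m * Φ (‖q n m‖ / ε)) ∧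
        ∑' m : ℤ, mu k' Φ w m * Φ (‖q n m‖ / ε) ≤ B := by
      intro n
      have hterm : ∀ m : ℤ, mu k' Φ w m * Φ (‖q n m‖ / ε) ≤
          G * (mu k' Φ w m * Φ (‖q n m‖ / κ')) := by
        intro m
        have h1 : Φ (‖q n m‖ / ε) ≤ G * Φ (‖q n m‖ / κ') :=
          hG _ (norm_nonneg _) (hqabs n m)
        have hμ : 0 ≤ mu k' Φ w m := (mu_pos hΦ hw₀ hw hk' m).le
        calc mu k' Φ w m * Φ (‖q n m‖ / ε)
            ≤ mu k' Φ w m * (G * Φ (‖q n m‖ / κ')) :=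
              mul_le_mul_of_nonneg_left h1 hμ
          _ = G * (mu k' Φ w m * Φ (‖q n m‖ / κ')) := by ring
      have hsum : Summable (fun m : ℤ => mu k' Φ w m * Φ (‖q n m‖ / ε)) :=
        Summable.of_nonneg_of_le (fun m => term_nonneg hΦ hw₀ hw hk' _ hε m) hterm
          ((hqbase n).1.mul_left G)
      refine ⟨hsum, ?_⟩
      calc ∑' m : ℤ, mu k' Φ w m * Φ (‖q n m‖ / ε)
          ≤ ∑' m : ℤ, G * (mu k' Φ w m * Φ (‖q n m‖ / κ')) :=
            Summable.tsum_le_tsum hterm hsum ((hqbase n).1.mul_left G)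
        _ = G * ∑' m : ℤ, mu k' Φ w m * Φ (‖q n m‖ / κ') := tsum_mul_left
        _ ≤ G * G₂ := mul_le_mul_of_nonneg_left (hqbase n).2 (by linarith)
    obtain ⟨M, hM⟩ := ((hfactendsto.mul_const B).eventually_lt_const
      (by rw [zero_mul]; norm_num : (0:ℝ) * B < 1/2)).exists
    set F : Finset ℤ := Finset.Icc (-(M:ℤ)) (M:ℤ) with hFdef
    have hFm : ∀ m : ℤ, m ∉ F → (M:ℝ) ≤ |(m:ℝ)| := by
      intro m hm
      simp only [hFdef, Finset.mem_Icc, not_and_or, not_le] at hm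
      have : (M:ℤ) ≤ |m| := by
        rcases hm with h | h
        · rw [abs_of_nonpos (by omega)]; omega
        · rw [abs_of_nonneg (by omega)]; omega
      calc (M:ℝ) ≤ ((|m| : ℤ) : ℝ) := by exact_mod_cast this
      _ = |(m:ℝ)| := by push_cast; ring
    have hfacnn : (0:ℝ) ≤ (1 + Φ (M:ℝ))^(k-k') := by
      apply Real.rpow_nonneg
      have := phi_nonneg hΦ (Nat.cast_nonneg M)
      linarith
    have hqksum : ∀ n, Summable (fun m : ℤ => mu k Φ w m * Φ (‖q n m‖ / ε)) := by
      intro n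
      refine Summable.of_nonneg_of_le (fun m => term_nonneg hΦ hw₀ hw hk _ hε m)
        (fun m => ?_) (hqε n).1
      exact mul_le_mul_of_nonneg_right (mu_mono hΦ hw₀ hw hk hkk.le m)
        (phi_nonneg hΦ (div_nonneg (norm_nonneg _) hε.le))
    have htail : ∀ n, ∑' m : ((F : Set ℤ)ᶜ : Set ℤ), mu k Φ w (↑m) * Φ (‖q n ↑m‖ / ε) ≤ 1/2 := by
      intro n
      have hsubk : Summable (fun m : ((F : Set ℤ)ᶜ : Set ℤ) =>
          mu k Φ w (↑m) * Φ (‖q n ↑m‖ / ε)) := (hqksum n).subtype _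
      have hsubk' : Summable (fun m : ((F : Set ℤ)ᶜ : Set ℤ) =>
          mu k' Φ w (↑m) * Φ (‖q n ↑m‖ / ε)) := (hqε n).1.subtype _
      calc ∑' m : ((F : Set ℤ)ᶜ : Set ℤ), mu k Φ w (↑m) * Φ (‖q n ↑m‖ / ε)
          ≤ ∑' m : ((F : Set ℤ)ᶜ : Set ℤ),
            (1 + Φ (M:ℝ))^(k-k') * (mu k' Φ w (↑m) * Φ (‖q n ↑m‖ / ε)) := by
            apply Summable.tsum_le_tsum _ hsubk (hsubk'.mul_left _)
            intro m
            exact hfac M (↑m) (hFm _ m.2) _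
              (phi_nonneg hΦ (div_nonneg (norm_nonneg _) hε.le))
        _ = (1 + Φ (M:ℝ))^(k-k') *
            ∑' m : ((F : Set ℤ)ᶜ : Set ℤ), mu k' Φ w (↑m) * Φ (‖q n ↑m‖ / ε) :=
            tsum_mul_left
        _ ≤ (1 + Φ (M:ℝ))^(k-k') *
            ∑' m : ℤ, mu k' Φ w m * Φ (‖q n m‖ / ε) := by
            apply mul_le_mul_of_nonneg_left _ hfacnn
            exact Summable.tsum_subtype_le _ _ (fun m => term_nonneg hΦ hw₀ hw hk' _ hε m) (hqε n).1
        _ ≤ (1 + Φ (M:ℝ))^(k-k') * B :=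
            mul_le_mul_of_nonneg_left (hqε n).2 hfacnn
        _ ≤ 1/2 := hM.le
    have hfin : Tendsto (fun n => ∑ m ∈ F, mu k Φ w m * Φ (‖q n m‖ / ε))
        atTop (𝓝 0) := by
      have hterm0 : ∀ m : ℤ, Tendsto (fun n => mu k Φ w m * Φ (‖q n m‖ / ε))
          atTop (𝓝 0) := by
        intro m
        have h1 : Tendsto (fun n => ‖q n m‖ / ε) atTop (𝓝 0) := by
          have := (habs0 m).div_const ε
          simpa [hqeq] using this
        have h2 : ContinuousWithinAt Φ (Set.Ici 0) 0 := hΦ.1 _ (Set.mem_Ici.2 le_rfl)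
        have h3 : Tendsto (fun n => Φ (‖q n m‖ / ε)) atTop (𝓝 0) := by
          have h4 := h2.tendsto.comp (tendsto_nhdsWithin_iff.2 ⟨h1, Eventually.of_forall
            fun n => Set.mem_Ici.2 (div_nonneg (norm_nonneg _) hε.le)⟩)
          rwa [hΦ0] at h4
        simpa using h3.const_mul (mu k Φ w m)
      have := tendsto_finset_sum F (fun m _ => hterm0 m)
      simpa using this
    have hev2 : ∀ᶠ n in atTop,
        ∑ m ∈ F, mu k Φ w m * Φ (‖q n m‖ / ε) ≤ 1/2 :=
      (hfin.eventually_lt_const (by norm_num : (0:ℝ) < 1/2)).mono fun n hn => le_of_lt hn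
    filter_upwards [hev2] with n hn
    have hsummem := hqksum n
    have htsum_le : ∑' m : ℤ, mu k Φ w m * Φ (‖q n m‖ / ε) ≤ 1 := by
      have hsplit := Summable.tsum_add_tsum_compl (s := (F : Set ℤ))
        (hsummem.subtype _) (hsummem.subtype _)
      rw [← hsplit]
      have h1 : ∑' m : ((F : Set ℤ) : Set ℤ), mu k Φ w (↑m) * Φ (‖q n ↑m‖ / ε)
          = ∑ m ∈ F, mu k Φ w m * Φ (‖q n m‖ / ε) :=
        Finset.tsum_subtype F (fun m => mu k Φ w m * Φ (‖q n m‖ / ε))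
      rw [h1]
      linarith [htail n]
    have hmem : ε ∈ normSet k Φ w (q n) := ⟨hε, hsummem, htsum_le⟩
    exact csInf_le ⟨0, fun x hx => hx.1.le⟩ hmem
  -- conclude
  refine ⟨φ, hφ, p, hpMemS, ?_⟩
  have hnonneg : ∀ n, 0 ≤ luxNorm k Φ w (q n) :=
    fun n => Real.sInf_nonneg (fun x hx => hx.1.le)
  rw [Metric.tendsto_atTop]
  intro ε hε
  obtain ⟨N, hN⟩ := eventually_atTop.1 (main (ε/2) (by linarith))
  refine ⟨N, fun n hn => ?_⟩
  have h1 := hN n hn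
  have h2 := hnonneg n
  rw [Real.dist_eq, sub_zero, abs_of_nonneg h2]
  linarith
end
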